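/- arXiv:2311.17247 — 3 statements merged into one kernel-verified Lean document; each statement's English description precedes it below -/
import Mathlib

section
/- A formal series D(z,w) = Σ_{m,n∈ℤ} D_{m,n} z^{-m-1} w^{-n-1} with coefficients in a vector space satisfies (z-w)^N D(z,w) = 0 if and only if D(z,w) = Σ_{j=0}^{N-1} c_j(w) ∂_w^{(j)} δ(z,w) for some formal series c_j(w) in one variable; moreover in that case c_j(w) = res_z((z-w)^j D(z,w)). -/
section
variable (V : Type*) [AddCommGroup V] [Module ℂ V]

/-- A formal series in two variables `z, w` with coefficients in `V`:
`D i j` is the coefficient of `z^i w^j`. -/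
def FormalSeries2 := ℤ → ℤ → V

variable {V}

/-- Multiplication of a two-variable formal series by `(z - w)`. -/
noncomputable def mulZsubW (D : FormalSeries2 V) : FormalSeries2 V :=
  fun i j => D (i - 1) j - D i (j - 1)

/-- Formal partial derivative `∂_w`. -/
noncomputable def dW (D : FormalSeries2 V) : FormalSeries2 V :=
  fun i j => ((j + 1 : ℤ) : ℂ) • D i (j + 1)

/-- The formal delta function `δ(z,w) = Σ_{m∈ℤ} z^{-m-1} w^m`. -/
noncomputable def fdelta : FormalSeries2 ℂ := fun i j => if j = -i - 1 then 1 else 0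

/-- The divided-power derivative `∂_w^{(n)} δ(z,w)`. -/
noncomputable def pdelta (n : ℕ) : FormalSeries2 ℂ :=
  fun i j => ((n.factorial : ℂ))⁻¹ * (dW^[n] fdelta) i j

/-- The residue `res_z` of a two-variable series: the coefficient of `z^{-1}`,
as a one-variable series in `w`. -/
noncomputable def resZ (D : FormalSeries2 V) : ℤ → V := fun j => D (-1) j

/-- The product `c(w) · E(z,w)` of a one-variable series `c` with coefficients
in `V` with a scalar two-variable series `E` (defined whenever, for each fixed
power of `z`, only finitely many `w`-coefficients of `E` are nonzero, as is the
case for `E = ∂_w^{(j)}δ`). -/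
noncomputable def wMul (c : ℤ → V) (E : FormalSeries2 ℂ) : FormalSeries2 V :=
  fun i k => ∑ᶠ b : ℤ, E i b • c (k - b)

/-- Generalized binomial coefficient `C(m, n)` for integer `m`, as a complex number. -/
noncomputable def bcoef (m : ℤ) (n : ℕ) : ℂ :=
  (∏ t ∈ Finset.range n, ((m : ℂ) - t)) / n.factorial

lemma bcoef_zero (m : ℤ) : bcoef m 0 = 1 := by simp [bcoef]

lemma bcoef_zero_succ (j : ℕ) : bcoef 0 (j + 1) = 0 := by
  unfold bcoef
  rw [Finset.prod_eq_zero (Finset.mem_range.mpr (Nat.succ_pos j)) (by norm_num), zero_div]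

lemma pascal_aux (x : ℂ) (j : ℕ) :
    (∏ t ∈ Finset.range (j + 1), (x - t)) - ∏ t ∈ Finset.range (j + 1), (x - 1 - t)
      = ((j : ℂ) + 1) * ∏ t ∈ Finset.range j, (x - 1 - t) := by
  rw [Finset.prod_range_succ' (fun t => x - t), Finset.prod_range_succ]
  rw [Finset.prod_congr rfl (fun t _ => show x - ((t + 1 : ℕ) : ℂ) = x - 1 - t by
    push_cast; ring)]
  push_cast
  ring

lemma bcoef_pascal (m : ℤ) (j : ℕ) :
    bcoef m (j + 1) - bcoef (m - 1) (j + 1) = bcoef (m - 1) j := by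
  unfold bcoef
  rw [div_sub_div_same]
  have hc : ((m - 1 : ℤ) : ℂ) = (m : ℂ) - 1 := by push_cast; ring
  simp only [hc]
  rw [pascal_aux, Nat.factorial_succ]
  push_cast
  rw [mul_div_mul_left _ _ (by exact_mod_cast Nat.succ_ne_zero j : ((j : ℂ) + 1) ≠ 0)]

lemma dW_iter (n : ℕ) (i j : ℤ) :
    (dW^[n] fdelta) i j = (∏ t ∈ Finset.range n, ((j : ℂ) + t + 1)) * fdelta i (j + n) := by
  induction n generalizing j with
  | zero => simp
  | succ n ih =>
    rw [Function.iterate_succ_apply']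
    show ((j + 1 : ℤ) : ℂ) • (dW^[n] fdelta) i (j + 1) = _
    rw [ih (j + 1), smul_eq_mul]
    have e1 : j + 1 + (n : ℤ) = j + ((n + 1 : ℕ) : ℤ) := by push_cast; ring
    rw [e1]
    rw [Finset.prod_range_succ' (fun t => (j : ℂ) + t + 1)]
    have hpc : (∏ t ∈ Finset.range n, ((j : ℂ) + ((t + 1 : ℕ) : ℂ) + 1))
        = ∏ t ∈ Finset.range n, (((j + 1 : ℤ) : ℂ) + (t : ℂ) + 1) :=
      Finset.prod_congr rfl fun t _ => by push_cast; ring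
    rw [hpc]
    push_cast
    ring

lemma prod_shift (n : ℕ) (x : ℂ) :
    ∏ t ∈ Finset.range n, (x - n + t + 1) = ∏ t ∈ Finset.range n, (x - t) := by
  induction n with
  | zero => simp
  | succ n ih =>
    rw [Finset.prod_range_succ' (fun t => x - ((n + 1 : ℕ) : ℂ) + t + 1)]
    rw [Finset.prod_congr rfl (fun t _ =>
      show x - ((n + 1 : ℕ) : ℂ) + ((t + 1 : ℕ) : ℂ) + 1 = x - (n : ℕ) + t + 1 by
        push_cast; ring)]
    rw [ih, Finset.prod_range_succ]
    push_cast
    ring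

lemma pdelta_eq (n : ℕ) (i b : ℤ) :
    pdelta n i b = if b = -i - 1 - n then bcoef (-i - 1) n else 0 := by
  unfold pdelta
  rw [dW_iter]
  unfold fdelta
  by_cases h : b = -i - 1 - n
  · have hcond : b + (n : ℤ) = -i - 1 := by omega
    rw [if_pos hcond, if_pos h, mul_one]
    have hpc : (∏ t ∈ Finset.range n, ((b : ℂ) + (t : ℂ) + 1))
        = ∏ t ∈ Finset.range n, (((-i - 1 : ℤ) : ℂ) - (n : ℂ) + (t : ℂ) + 1) :=
      Finset.prod_congr rfl fun t _ => by rw [h]; push_cast; ring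
    rw [hpc, prod_shift]
    unfold bcoef
    rw [inv_mul_eq_div]
  · have hcond : ¬ (b + (n : ℤ) = -i - 1) := by omega
    rw [if_neg hcond, if_neg h, mul_zero, mul_zero]

/-- The explicit form of `wMul c (pdelta j)`. -/
noncomputable def Wf (j : ℕ) (c : ℤ → V) : FormalSeries2 V :=
  fun i k => bcoef (-i - 1) j • c (k + i + 1 + j)

lemma wMul_pdelta (c : ℤ → V) (j : ℕ) : wMul c (pdelta j) = Wf j c := by
  funext i k
  show (∑ᶠ b : ℤ, pdelta j i b • c (k - b)) = bcoef (-i - 1) j • c (k + i + 1 + j)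
  have h0 : ∀ b : ℤ, b ≠ -i - 1 - (j : ℤ) → pdelta j i b • c (k - b) = 0 := by
    intro b hb
    rw [pdelta_eq, if_neg hb, zero_smul]
  rw [finsum_eq_single _ (-i - 1 - (j : ℤ)) h0, pdelta_eq, if_pos rfl]
  have e : k - (-i - 1 - (j : ℤ)) = k + i + 1 + j := by ring
  rw [e]

lemma mulZsubW_Wf_succ (j : ℕ) (c : ℤ → V) :
    mulZsubW (Wf (j + 1) c) = Wf j c := by
  funext i k
  show Wf (j + 1) c (i - 1) k - Wf (j + 1) c i (k - 1) = Wf j c i k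
  unfold Wf
  have e1 : (-(i - 1) - 1 : ℤ) = -i := by ring
  have e2 : k + (i - 1) + 1 + ((j + 1 : ℕ) : ℤ) = k + i + 1 + j := by push_cast; ring
  have e3 : (k - 1) + i + 1 + ((j + 1 : ℕ) : ℤ) = k + i + 1 + j := by push_cast; ring
  rw [e1, e2, e3, ← sub_smul, bcoef_pascal]

lemma mulZsubW_Wf_zero (c : ℤ → V) : mulZsubW (Wf 0 c) = fun _ _ => 0 := by
  funext i k
  show Wf 0 c (i - 1) k - Wf 0 c i (k - 1) = 0
  unfold Wf
  rw [bcoef_zero, bcoef_zero, one_smul, one_smul]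
  have e : k + (i - 1) + 1 + ((0 : ℕ) : ℤ) = (k - 1) + i + 1 + ((0 : ℕ) : ℤ) := by
    push_cast; ring
  rw [e, sub_self]

lemma mulZsubW_zero : mulZsubW (fun _ _ => (0 : V)) = fun _ _ => 0 := by
  funext i k
  show (0 : V) - 0 = 0
  rw [sub_zero]

lemma mulZsubW_iter_zero (n : ℕ) : mulZsubW^[n] (fun _ _ => (0 : V)) = fun _ _ => 0 := by
  induction n with
  | zero => rfl
  | succ n ih => erw [Function.iterate_succ_apply, mulZsubW_zero, ih]

lemma iter_Wf_shift (t j : ℕ) (c : ℤ → V) :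
    mulZsubW^[t] (Wf (j + t) c) = Wf j c := by
  induction t with
  | zero => rfl
  | succ t ih =>
    rw [Function.iterate_succ_apply]
    have e : j + (t + 1) = (j + t) + 1 := rfl
    rw [e, mulZsubW_Wf_succ, ih]

lemma iter_Wf_kill' (j : ℕ) (c : ℤ → V) :
    mulZsubW^[j + 1] (Wf j c) = fun _ _ => 0 := by
  rw [Function.iterate_succ_apply']
  have h := iter_Wf_shift j 0 (c := c)
  rw [Nat.zero_add] at h
  rw [h, mulZsubW_Wf_zero]

lemma iter_Wf_kill (N j : ℕ) (hj : j < N) (c : ℤ → V) :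
    mulZsubW^[N] (Wf j c) = fun _ _ => 0 := by
  have hN : N = (N - (j + 1)) + (j + 1) := by omega
  rw [hN, Function.iterate_add_apply, iter_Wf_kill', mulZsubW_iter_zero]

lemma mulZsubW_sum (s : Finset ℕ) (f : ℕ → FormalSeries2 V) :
    mulZsubW (fun i k => ∑ j ∈ s, f j i k) = fun i k => ∑ j ∈ s, mulZsubW (f j) i k := by
  funext i k
  show (∑ j ∈ s, f j (i - 1) k) - (∑ j ∈ s, f j i (k - 1)) = _
  rw [← Finset.sum_sub_distrib]
  rfl

lemma mulZsubW_iter_sum (n : ℕ) (s : Finset ℕ) (f : ℕ → FormalSeries2 V) :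
    mulZsubW^[n] (fun i k => ∑ j ∈ s, f j i k)
      = fun i k => ∑ j ∈ s, (mulZsubW^[n] (f j)) i k := by
  induction n with
  | zero => rfl
  | succ n ih =>
    erw [Function.iterate_succ_apply', ih, mulZsubW_sum]
    funext i k
    exact Finset.sum_congr rfl fun j _ => by
      rw [← Function.iterate_succ_apply' mulZsubW n (f j)]

lemma resZ_Wf_zero (c : ℤ → V) : resZ (Wf 0 c) = c := by
  funext k
  show bcoef (-(-1 : ℤ) - 1) 0 • c (k + (-1) + 1 + ((0 : ℕ) : ℤ)) = c k
  rw [bcoef_zero, one_smul]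
  norm_num

lemma resZ_Wf_succ (j : ℕ) (c : ℤ → V) : resZ (Wf (j + 1) c) = fun _ => 0 := by
  funext k
  show bcoef (-(-1 : ℤ) - 1) (j + 1) • c (k + (-1) + 1 + ((j + 1 : ℕ) : ℤ)) = 0
  have e : (-(-1 : ℤ) - 1) = 0 := by ring
  rw [e, bcoef_zero_succ, zero_smul]

lemma resZ_iter (N : ℕ) (c : ℕ → ℤ → V) (t : ℕ) (ht : t < N) :
    resZ (mulZsubW^[t] (fun i k => ∑ j ∈ Finset.range N, Wf j (c j) i k)) = c t := by
  rw [mulZsubW_iter_sum]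
  funext k
  show ∑ j ∈ Finset.range N, (mulZsubW^[t] (Wf j (c j))) (-1) k = c t k
  rw [Finset.sum_eq_single t]
  · have h := iter_Wf_shift t 0 (c := c t)
    rw [Nat.zero_add] at h
    rw [h]
    exact congrFun (resZ_Wf_zero (c t)) k
  · intro j hj hne
    rcases lt_or_gt_of_ne hne with hlt | hgt
    · rw [iter_Wf_kill t j hlt]
    · obtain ⟨d, hd⟩ : ∃ d, j = (d + 1) + t := ⟨j - t - 1, by omega⟩
      rw [hd, iter_Wf_shift]
      exact congrFun (resZ_Wf_succ d (c (d + 1 + t))) k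
  · intro h
    exact absurd (Finset.mem_range.mpr ht) h

lemma const_of_mulZsubW_eq_zero (E : FormalSeries2 V)
    (hE : mulZsubW E = fun _ _ => 0) : ∀ i k, E i k = E (-1) (k + i + 1) := by
  have hrel : ∀ i k : ℤ, E (i - 1) k = E i (k - 1) := by
    intro i k
    have h := congrFun (congrFun hE i) k
    exact sub_eq_zero.mp h
  have hup : ∀ (n : ℕ) (i k : ℤ), E i k = E (i - n) (k + n) := by
    intro n
    induction n with
    | zero => intro i k; norm_num
    | succ n ih =>
      intro i k
      rw [ih i k]
      have h2 := hrel (i - n) (k + n + 1)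
      have e : k + (n : ℤ) + 1 - 1 = k + n := by ring
      rw [e] at h2
      rw [← h2]
      have e1 : i - ((n + 1 : ℕ) : ℤ) = i - n - 1 := by push_cast; ring
      have e2 : k + ((n + 1 : ℕ) : ℤ) = k + n + 1 := by push_cast; ring
      rw [e1, e2]
  have hdown : ∀ (n : ℕ) (i k : ℤ), E i k = E (i + n) (k - n) := by
    intro n
    induction n with
    | zero => intro i k; norm_num
    | succ n ih =>
      intro i k
      rw [ih i k]
      have h2 := hrel (i + n + 1) (k - n)
      have e : i + (n : ℤ) + 1 - 1 = i + n := by ring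
      rw [e] at h2
      rw [h2]
      have e1 : i + ((n + 1 : ℕ) : ℤ) = i + n + 1 := by push_cast; ring
      have e2 : k - ((n + 1 : ℕ) : ℤ) = k - n - 1 := by push_cast; ring
      rw [e1, e2]
  intro i k
  rcases le_or_gt 0 (i + 1) with h | h
  · obtain ⟨n, hn⟩ : ∃ n : ℕ, (n : ℤ) = i + 1 := ⟨(i + 1).toNat, Int.toNat_of_nonneg h⟩
    rw [hup n i k]
    congr 1 <;> omega
  · obtain ⟨n, hn⟩ : ∃ n : ℕ, (n : ℤ) = -(i + 1) :=
      ⟨(-(i + 1)).toNat, Int.toNat_of_nonneg (by omega)⟩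
    rw [hdown n i k]
    congr 1 <;> omega

lemma forward_direction (N : ℕ) : ∀ D : FormalSeries2 V,
    mulZsubW^[N] D = (fun _ _ => 0) →
    ∃ c : ℕ → ℤ → V, D = fun i k => ∑ j ∈ Finset.range N, Wf j (c j) i k := by
  induction N with
  | zero =>
    intro D h
    refine ⟨fun _ _ => 0, ?_⟩
    funext i k
    rw [Finset.range_zero, Finset.sum_empty]
    exact congrFun (congrFun h i) k
  | succ N ih =>
    intro D h
    rw [Function.iterate_succ_apply] at h
    obtain ⟨c, hc⟩ := ih (mulZsubW D) h
    set E : FormalSeries2 V :=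
      fun i k => D i k - ∑ j ∈ Finset.range N, Wf (j + 1) (c j) i k with hEdef
    have hE : mulZsubW E = fun _ _ => 0 := by
      funext i k
      show (D (i - 1) k - ∑ j ∈ Finset.range N, Wf (j + 1) (c j) (i - 1) k)
          - (D i (k - 1) - ∑ j ∈ Finset.range N, Wf (j + 1) (c j) i (k - 1)) = 0
      have h1 : D (i - 1) k - D i (k - 1) = ∑ j ∈ Finset.range N, Wf j (c j) i k :=
        congrFun (congrFun hc i) k
      have h2 : ∀ j ∈ Finset.range N,
          Wf (j + 1) (c j) (i - 1) k - Wf (j + 1) (c j) i (k - 1) = Wf j (c j) i k :=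
        fun j _ => congrFun (congrFun (mulZsubW_Wf_succ j (c j)) i) k
      rw [sub_sub_sub_comm, ← Finset.sum_sub_distrib, h1, Finset.sum_congr rfl h2, sub_self]
    have hconst := const_of_mulZsubW_eq_zero E hE
    refine ⟨fun j => Nat.rec (fun m => E (-1) m) (fun j _ => c j) j, ?_⟩
    funext i k
    rw [Finset.sum_range_succ']
    show D i k = (∑ j ∈ Finset.range N, Wf (j + 1) (c j) i k)
        + Wf 0 (fun m => E (-1) m) i k
    have hW0 : Wf 0 (fun m => E (-1) m) i k = E i k := by
      show bcoef (-i - 1) 0 • E (-1) (k + i + 1 + ((0 : ℕ) : ℤ)) = E i k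
      rw [bcoef_zero, one_smul]
      have e : k + i + 1 + ((0 : ℕ) : ℤ) = k + i + 1 := by push_cast; ring
      rw [e]
      exact (hconst i k).symm
    rw [hW0]
    show D i k = (∑ j ∈ Finset.range N, Wf (j + 1) (c j) i k)
        + (D i k - ∑ j ∈ Finset.range N, Wf (j + 1) (c j) i k)
    abel

/-- a formal series `D(z,w)` satisfies `(z-w)^N D = 0` if and
only if `D = Σ_{j=0}^{N-1} c_j(w) ∂_w^{(j)} δ(z,w)` for some one-variable
series `c_j(w)`; and in that case `c_j(w) = res_z((z-w)^j D(z,w))`. -/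
theorem locality_iff_delta_expansion (N : ℕ) (D : FormalSeries2 V) :
    ((mulZsubW^[N] D = fun _ _ => 0) ↔
      ∃ c : ℕ → ℤ → V,
        D = fun i k => ∑ j ∈ Finset.range N, wMul (c j) (pdelta j) i k) ∧
    (mulZsubW^[N] D = (fun _ _ => 0) →
      D = fun i k =>
        ∑ j ∈ Finset.range N, wMul (resZ (mulZsubW^[j] D)) (pdelta j) i k) := by
  have hWP : ∀ (c : ℕ → ℤ → V),
      (fun i k => ∑ j ∈ Finset.range N, wMul (c j) (pdelta j) i k)
      = (fun i k => ∑ j ∈ Finset.range N, Wf j (c j) i k) := by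
    intro c
    funext i k
    exact Finset.sum_congr rfl fun j _ => congrFun (congrFun (wMul_pdelta (c j) j) i) k
  constructor
  · constructor
    · intro h
      obtain ⟨c, hc⟩ := forward_direction N D h
      exact ⟨c, by rw [hWP c]; exact hc⟩
    · rintro ⟨c, hc⟩
      rw [hc, hWP c, mulZsubW_iter_sum]
      funext i k
      show ∑ j ∈ Finset.range N, (mulZsubW^[N] (Wf j (c j))) i k = 0
      refine Finset.sum_eq_zero fun j hj => ?_
      rw [iter_Wf_kill N j (Finset.mem_range.mp hj)]
  · intro h
    obtain ⟨c, hc⟩ := forward_direction N D h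
    have hres : ∀ t ∈ Finset.range N, resZ (mulZsubW^[t] D) = c t := by
      intro t ht
      rw [hc]
      exact resZ_iter N c t (Finset.mem_range.mp ht)
    have heq : (fun i k => ∑ j ∈ Finset.range N, wMul (resZ (mulZsubW^[j] D)) (pdelta j) i k)
        = fun i k => ∑ j ∈ Finset.range N, Wf j (c j) i k := by
      funext i k
      refine Finset.sum_congr rfl fun j hj => ?_
      rw [congrFun (congrFun (wMul_pdelta (resZ (mulZsubW^[j] D)) j) i) k, hres j hj]
    rw [heq]
    exact hc

end
end

section
/- On the polynomial ring H = ℂ[x_1, x_2, ...] with Heisenberg operators h_n, the operators L_n = (1/2)Σ_{j∈ℤ} h_{n-j}h_j for n ≠ 0 and L_0 = Σ_{j≥1} h_{-j}h_j (using h_0 = 0) satisfy the Virasoro relations [L_m, L_n] = (m-n)L_{m+n} + δ_{m,-n}·((m³-m)/12)·Id_H, i.e., H is a module of central charge 1 over the Virasoro algebra. -/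
open MvPolynomial

/-- The Heisenberg operators on `H = ℂ[x₁, x₂, …]`: `h_m` is multiplication by
`x_{-m}` for `m < 0`, `m·∂/∂x_m` for `m > 0`, and `h_0 = 0`. -/
noncomputable def heisOp (m : ℤ) : Module.End ℂ (MvPolynomial ℕ ℂ) :=
  if m < 0 then LinearMap.mulLeft ℂ (X (-m).toNat)
  else if 0 < m then (m.toNat : ℂ) • (pderiv m.toNat : Derivation ℂ (MvPolynomial ℕ ℂ) (MvPolynomial ℕ ℂ)).toLinearMap
  else 0

/-- The Virasoro operators on `H`:
`L_n = (1/2) Σ_{j∈ℤ} h_{n-j} h_j` for `n ≠ 0`, and `L_0 = Σ_{j≥1} h_{-j} h_j`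
(on each polynomial only finitely many summands act nontrivially). -/
noncomputable def virOp (n : ℤ) : MvPolynomial ℕ ℂ → MvPolynomial ℕ ℂ := fun p =>
  if n = 0 then ∑ᶠ j : ℤ, if 1 ≤ j then heisOp (-j) (heisOp j p) else 0
  else (2 : ℂ)⁻¹ • ∑ᶠ j : ℤ, heisOp (n - j) (heisOp j p)

section AuxVirasoro
open Finset

lemma heis_zero' : heisOp 0 = 0 := by simp [heisOp]

lemma heis_neg (k : ℕ) (hk : 0 < k) (q : MvPolynomial ℕ ℂ) :
    heisOp (-(k:ℤ)) q = X k * q := by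
  have h : (-(k:ℤ)) < 0 := by omega
  simp [heisOp, h, hk]

lemma heis_pos (k : ℕ) (q : MvPolynomial ℕ ℂ) :
    heisOp (k:ℤ) q = (k:ℂ) • pderiv k q := by
  rcases Nat.eq_zero_or_pos k with h | h
  · simp [h, heisOp]
  · have h1 : ¬ ((k:ℤ) < 0) := by omega
    have h2 : (0:ℤ) < k := by exact_mod_cast h
    simp [heisOp, h1, h2, h]

lemma pderiv_comm' (i j : ℕ) (p : MvPolynomial ℕ ℂ) :
    pderiv i (pderiv j p) = pderiv j (pderiv i p) := by
  induction p using MvPolynomial.induction_on with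
  | C a => simp
  | add p q hp hq => simp [hp, hq]
  | mul_X p k hp =>
    simp only [pderiv_mul, pderiv_X, map_add, hp, Pi.single_apply]
    split_ifs <;> simp <;> ring

lemma heis_comm_neg_pos (k l : ℕ) (hk : 0 < k) (hl : 0 < l) (q : MvPolynomial ℕ ℂ) :
    heisOp (-(k:ℤ)) (heisOp (l:ℤ) q) = heisOp (l:ℤ) (heisOp (-(k:ℤ)) q)
      + (if (-(k:ℤ)) = -(l:ℤ) then ((Int.cast (-(k:ℤ))) : ℂ) else 0) • q := by
  rw [heis_pos, heis_neg k hk, heis_neg k hk, heis_pos, pderiv_mul]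
  by_cases h : k = l
  · subst h
    rw [pderiv_X_self, if_pos rfl]
    have hc : ((Int.cast (-(k:ℤ))) : ℂ) = -(k:ℂ) := by push_cast; ring
    rw [hc]
    simp only [smul_add, mul_smul_comm, one_mul, neg_smul]
    abel
  · rw [pderiv_X_of_ne h, if_neg (by omega), zero_mul, zero_add, zero_smul,
      add_zero, mul_smul_comm]

lemma heis_comm (a b : ℤ) (q : MvPolynomial ℕ ℂ) :
    heisOp a (heisOp b q) = heisOp b (heisOp a q) + (if a = -b then (a:ℂ) else 0) • q := by
  rcases lt_trichotomy a 0 with ha|rfl|ha <;> rcases lt_trichotomy b 0 with hb|rfl|hb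
  · -- a<0, b<0
    have hak : a = -(((-a).toNat : ℕ) : ℤ) := by omega
    have hbk : b = -(((-b).toNat : ℕ) : ℤ) := by omega
    rw [hak, hbk, heis_neg _ (by omega), heis_neg _ (by omega), heis_neg _ (by omega),
      heis_neg _ (by omega), if_neg (by omega), zero_smul, add_zero]
    ring
  · simp [heis_zero', ha.ne]
  · -- a<0, b>0
    have hak : a = -(((-a).toNat : ℕ) : ℤ) := by omega
    have hbk : b = ((b.toNat : ℕ) : ℤ) := by omega
    rw [hak, hbk]
    exact heis_comm_neg_pos (-a).toNat b.toNat (by omega) (by omega) q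
  · simp [heis_zero']
  · simp [heis_zero']
  · simp [heis_zero']
  · -- a>0, b<0
    have hak : a = ((a.toNat : ℕ) : ℤ) := by omega
    have hbk : b = -(((-b).toNat : ℕ) : ℤ) := by omega
    have haux := heis_comm_neg_pos (-b).toNat a.toNat (by omega) (by omega) q
    rw [← hbk, ← hak] at haux
    rw [haux]
    by_cases h : a = -b
    · rw [if_pos h, if_pos (by omega)]
      have hb' : (b:ℂ) = -(a:ℂ) := by rw [show b = -a by omega]; push_cast; ring
      rw [hb', neg_smul]
      abel
    · rw [if_neg (by omega), if_neg h]
      simp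
  · simp [heis_zero', ha.ne']
  · -- a>0, b>0
    have hak : a = ((a.toNat : ℕ) : ℤ) := by omega
    have hbk : b = ((b.toNat : ℕ) : ℤ) := by omega
    rw [hak, hbk, heis_pos, heis_pos, heis_pos, heis_pos, if_neg (by omega), zero_smul, add_zero,
      Derivation.map_smul, Derivation.map_smul, smul_smul, smul_smul, pderiv_comm']
    rw [mul_comm]

def Bd (q : MvPolynomial ℕ ℂ) (N : ℤ) : Prop := ∀ k : ℕ, N ≤ (k:ℤ) → pderiv k q = 0

lemma bd_exists (p : MvPolynomial ℕ ℂ) : ∃ B : ℤ, 1 ≤ B ∧ Bd p B := by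
  refine ⟨max 1 ((p.vars.sup id : ℕ) + 1), le_max_left _ _, fun k hk => ?_⟩
  apply pderiv_eq_zero_of_notMem_vars
  intro hmem
  have h2 : k ≤ p.vars.sup id := Finset.le_sup (f := id) hmem
  omega

lemma Bd.mono {q : MvPolynomial ℕ ℂ} {N N' : ℤ} (h : Bd q N) (hle : N ≤ N') : Bd q N' :=
  fun k hk => h k (le_trans hle hk)

lemma Bd.heis {q : MvPolynomial ℕ ℂ} {N : ℤ} (h : Bd q N) (a : ℤ) :
    Bd (heisOp a q) (max N (1 - a)) := by
  intro k hk
  rcases lt_trichotomy a 0 with ha|rfl|ha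
  · rw [show a = -(((-a).toNat : ℕ) : ℤ) by omega, heis_neg _ (by omega), pderiv_mul,
      pderiv_X_of_ne (by omega), zero_mul, zero_add, h k (by omega), mul_zero]
  · rw [heis_zero']; simp
  · rw [show a = ((a.toNat : ℕ) : ℤ) by omega, heis_pos, Derivation.map_smul,
      pderiv_comm', h k (by omega)]
    simp

lemma Bd.sum {ι : Type*} {s : Finset ι} {f : ι → MvPolynomial ℕ ℂ} {N : ℤ}
    (h : ∀ i ∈ s, Bd (f i) N) : Bd (∑ i ∈ s, f i) N := by
  intro k hk
  rw [map_sum]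
  exact Finset.sum_eq_zero fun i hi => h i hi k hk

lemma Bd.smul {q : MvPolynomial ℕ ℂ} {N : ℤ} (c : ℂ) (h : Bd q N) : Bd (c • q) N := by
  intro k hk
  rw [Derivation.map_smul, h k hk, smul_zero]

lemma heis_heis_eq_zero {q : MvPolynomial ℕ ℂ} {N : ℤ} (hq : Bd q N) (h1 : 1 ≤ N)
    {n R j : ℤ} (hn : n ≠ 0) (hR : N + |n| ≤ R) (hj : j ∉ Finset.Icc (-R) R) :
    heisOp (n - j) (heisOp j q) = 0 := by
  rw [Finset.mem_Icc, not_and_or] at hj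
  have habs1 : n ≤ |n| := le_abs_self n
  have habs2 : -n ≤ |n| := neg_le_abs n
  rcases hj with hj | hj
  · -- j < -R
    push_neg at hj
    rw [show j = -((((-j).toNat) : ℕ) : ℤ) by omega, heis_neg _ (by omega),
      show n - -((((-j).toNat) : ℕ) : ℤ) = (((n + ((-j).toNat)).toNat : ℕ) : ℤ) by omega,
      heis_pos, pderiv_mul, pderiv_X_of_ne (by omega), zero_mul, zero_add,
      hq _ (by push_cast; omega), mul_zero, smul_zero]
  · -- R < j
    push_neg at hj
    rw [show j = ((j.toNat : ℕ) : ℤ) by omega, heis_pos, hq _ (by omega), smul_zero, map_zero]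

lemma heis_pos_eq_zero {q : MvPolynomial ℕ ℂ} {N : ℤ} (hq : Bd q N) {j : ℤ} (hj : N ≤ j) (h1 : 1 ≤ N) :
    heisOp j q = 0 := by
  rw [show j = ((j.toNat : ℕ) : ℤ) by omega, heis_pos, hq _ (by omega), smul_zero]

lemma virop_eq {n : ℤ} (hn : n ≠ 0) (q : MvPolynomial ℕ ℂ) {N R : ℤ} (hq : Bd q N)
    (h1 : 1 ≤ N) (hR : N + |n| ≤ R) :
    virOp n q = (2:ℂ)⁻¹ • ∑ j ∈ Finset.Icc (-R) R, heisOp (n - j) (heisOp j q) := by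
  rw [virOp, if_neg hn]
  congr 1
  apply finsum_eq_sum_of_support_subset
  intro j hj
  simp only [Function.mem_support] at hj
  by_contra hmem
  exact hj (heis_heis_eq_zero hq h1 hn hR hmem)

lemma virop_zero_eq (q : MvPolynomial ℕ ℂ) {N R : ℤ} (hq : Bd q N) (h1 : 1 ≤ N) (hR : N ≤ R) :
    virOp 0 q = ∑ j ∈ Finset.Icc (1:ℤ) R, heisOp (-j) (heisOp j q) := by
  rw [virOp, if_pos rfl]
  rw [finsum_eq_sum_of_support_subset _ (s := Finset.Icc (1:ℤ) R) ?_]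
  · exact Finset.sum_congr rfl fun j hj => if_pos (Finset.mem_Icc.mp hj).1
  · intro j hj
    simp only [Function.mem_support] at hj
    by_contra hmem
    rw [Finset.mem_coe, Finset.mem_Icc, not_and_or] at hmem
    rcases hmem with h | h
    · exact hj (if_neg (by omega))
    · push_neg at h
      refine hj ?_
      rw [if_pos (by omega), heis_pos_eq_zero hq (by omega) h1, map_zero]

lemma heis_quad (a b c d : ℤ) (q : MvPolynomial ℕ ℂ) :
    heisOp a (heisOp b (heisOp c (heisOp d q))) - heisOp c (heisOp d (heisOp a (heisOp b q)))
    = (if b = -c then (b:ℂ) else 0) • heisOp a (heisOp d q)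
    + (if b = -d then (b:ℂ) else 0) • heisOp a (heisOp c q)
    + (if a = -c then (a:ℂ) else 0) • heisOp d (heisOp b q)
    + (if a = -d then (a:ℂ) else 0) • heisOp c (heisOp b q) := by
  rw [heis_comm b c (heisOp d q), map_add, map_smul,
    heis_comm b d q, map_add, map_smul, map_add, map_smul,
    heis_comm a c (heisOp d (heisOp b q)),
    heis_comm a d (heisOp b q), map_add, map_smul]
  abel

lemma sum_shift' (f : ℤ → MvPolynomial ℕ ℂ) (a b c : ℤ) :
    ∑ i ∈ Finset.Icc a b, f i = ∑ k ∈ Finset.Icc (a+c) (b+c), f (k - c) := by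
  rw [← Finset.map_add_right_Icc, Finset.sum_map]
  apply Finset.sum_congr rfl
  intro x _
  simp [addRightEmbedding]

lemma Icc_inter' (a b c d : ℤ) :
    Finset.Icc a b ∩ Finset.Icc c d = Finset.Icc (max a c) (min b d) := by
  ext x
  simp only [Finset.mem_inter, Finset.mem_Icc]
  omega

lemma vir_comm_eq (m n : ℤ) (hm : m ≠ 0) (hn : n ≠ 0) (p : MvPolynomial ℕ ℂ) {B Rb : ℤ}
    (hB : Bd p B) (h1B : 1 ≤ B) (hRb : Rb = B + 7*(|m|+|n|) + 7) :
    virOp m (virOp n p) - virOp n (virOp m p) = (2:ℂ)⁻¹ • (2:ℂ)⁻¹ • (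
        (∑ k ∈ Finset.Icc (max (-Rb) (-Rb-n) + n) (min Rb (Rb-n) + n), ((k-n:ℤ):ℂ) • heisOp (m+n-k) (heisOp k p))
      + (∑ k ∈ Finset.Icc (-Rb+n) (Rb+n), ((k-n:ℤ):ℂ) • heisOp (m+n-k) (heisOp k p))
      + (∑ i ∈ Finset.Icc (max (-Rb) (m+n-Rb)) (min Rb (m+n+Rb)), ((m-i:ℤ):ℂ) • heisOp (m+n-i) (heisOp i p))
      + (∑ i ∈ Finset.Icc (max (-Rb) (m-Rb)) (min Rb (m+Rb)), ((m-i:ℤ):ℂ) • heisOp (m+n-i) (heisOp i p))) := by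
  have hm1 : m ≤ |m| := le_abs_self m
  have hm2 : -m ≤ |m| := neg_le_abs m
  have hn1 : n ≤ |n| := le_abs_self n
  have hn2 : -n ≤ |n| := neg_le_abs n
  set S : Finset ℤ := Finset.Icc (-Rb) Rb with hS
  -- expansions of inner Virasoro operators at radius Rb
  have hqn : virOp n p = (2:ℂ)⁻¹ • ∑ j ∈ S, heisOp (n-j) (heisOp j p) :=
    virop_eq hn p hB h1B (by omega)
  have hqm : virOp m p = (2:ℂ)⁻¹ • ∑ j ∈ S, heisOp (m-j) (heisOp j p) :=
    virop_eq hm p hB h1B (by omega)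
  -- bounds
  have hBdn : Bd (virOp n p) (B + 2*(|m|+|n|) + 1) := by
    rw [virop_eq hn p hB h1B (R := B + |m| + |n|) (by omega)]
    refine Bd.smul _ (Bd.sum ?_)
    intro j hj
    rw [Finset.mem_Icc] at hj
    exact ((hB.heis j).heis (n-j)).mono (by omega)
  have hBdm : Bd (virOp m p) (B + 2*(|m|+|n|) + 1) := by
    rw [virop_eq hm p hB h1B (R := B + |m| + |n|) (by omega)]
    refine Bd.smul _ (Bd.sum ?_)
    intro j hj
    rw [Finset.mem_Icc] at hj
    exact ((hB.heis j).heis (m-j)).mono (by omega)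
  -- outer expansions
  have h2 : virOp m (virOp n p) = (2:ℂ)⁻¹ • ∑ i ∈ S, heisOp (m-i) (heisOp i (virOp n p)) :=
    virop_eq hm (virOp n p) hBdn (by omega) (by omega)
  have h3 : virOp n (virOp m p) = (2:ℂ)⁻¹ • ∑ j ∈ S, heisOp (n-j) (heisOp j (virOp m p)) :=
    virop_eq hn (virOp m p) hBdm (by omega) (by omega)
  rw [h2, hqn, h3, hqm]
  simp only [map_smul, map_sum]
  rw [← Finset.smul_sum, ← Finset.smul_sum, ← smul_sub, ← smul_sub]
  congr 1
  congr 1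
  -- now: ΣᵢΣⱼ Q - ΣⱼΣᵢ Q' = four sums
  rw [Finset.sum_comm (s := S) (t := S)
    (f := fun j i => heisOp (n-j) (heisOp j (heisOp (m-i) (heisOp i p))))]
  rw [← Finset.sum_sub_distrib]
  have inner : ∀ i ∈ S,
      ((∑ j ∈ S, heisOp (m-i) (heisOp i (heisOp (n-j) (heisOp j p)))) -
        ∑ j ∈ S, heisOp (n-j) (heisOp j (heisOp (m-i) (heisOp i p))))
      = (if i+n ∈ S then ((i:ℤ):ℂ) • heisOp (m+n-(i+n)) (heisOp (i+n) p) else 0)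
        + ((i:ℤ):ℂ) • heisOp (m+n-(i+n)) (heisOp (i+n) p)
        + (if m+n-i ∈ S then ((m-i:ℤ):ℂ) • heisOp (m+n-i) (heisOp i p) else 0)
        + (if i-m ∈ S then ((m-i:ℤ):ℂ) • heisOp (m+n-i) (heisOp i p) else 0) := by
    intro i hi
    rw [← Finset.sum_sub_distrib]
    have step1 : ∀ j ∈ S,
        heisOp (m-i) (heisOp i (heisOp (n-j) (heisOp j p))) -
          heisOp (n-j) (heisOp j (heisOp (m-i) (heisOp i p)))
        = (if j = i+n then ((i:ℤ):ℂ) • heisOp (m-i) (heisOp j p) else 0)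
          + (if j = -i then ((i:ℤ):ℂ) • heisOp (m-i) (heisOp (n-j) p) else 0)
          + (if j = m-i+n then ((m-i:ℤ):ℂ) • heisOp j (heisOp i p) else 0)
          + (if j = i-m then ((m-i:ℤ):ℂ) • heisOp (n-j) (heisOp i p) else 0) := by
      intro j _
      rw [heis_quad (m-i) i (n-j) j p]
      simp only [ite_smul, zero_smul]
      rw [if_congr (show (i = -(n-j)) ↔ j = i+n by omega) rfl rfl,
        if_congr (show (i = -j) ↔ j = -i by omega) rfl rfl,
        if_congr (show (m-i = -(n-j)) ↔ j = m-i+n by omega) rfl rfl,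
        if_congr (show (m-i = -j) ↔ j = i-m by omega) rfl rfl]
    rw [Finset.sum_congr rfl step1, Finset.sum_add_distrib, Finset.sum_add_distrib,
      Finset.sum_add_distrib, Finset.sum_ite_eq' S (i+n), Finset.sum_ite_eq' S (-i),
      Finset.sum_ite_eq' S (m-i+n), Finset.sum_ite_eq' S (i-m)]
    rw [if_pos (show -i ∈ S by rw [hS, Finset.mem_Icc] at hi ⊢; omega)]
    rw [show n - -i = i + n by ring, show m+n-(i+n) = m-i by ring,
      show m-i+n = m+n-i by ring, show n-(i-m) = m+n-i by ring]
  rw [Finset.sum_congr rfl inner, Finset.sum_add_distrib, Finset.sum_add_distrib,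
    Finset.sum_add_distrib]
  congr 1
  congr 1
  congr 1
  -- D1
  · refine (Finset.sum_congr rfl fun i _ => if_congr
      (show (i+n ∈ S) ↔ i ∈ Finset.Icc (-Rb-n) (Rb-n) by
        rw [hS]; simp only [Finset.mem_Icc]; omega) rfl rfl).trans ?_
    rw [Finset.sum_ite_mem, hS, Icc_inter', sum_shift' _ _ _ n]
    refine Finset.sum_congr rfl fun k _ => ?_
    rw [show k - n + n = k by ring]
  -- D2
  · rw [hS, sum_shift' _ _ _ n]
    refine Finset.sum_congr rfl fun k _ => ?_
    rw [show k - n + n = k by ring]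
  -- D3
  · refine (Finset.sum_congr rfl fun i _ => if_congr
      (show (m+n-i ∈ S) ↔ i ∈ Finset.Icc (m+n-Rb) (m+n+Rb) by
        rw [hS]; simp only [Finset.mem_Icc]; omega) rfl rfl).trans ?_
    rw [Finset.sum_ite_mem, hS, Icc_inter']
  -- D4
  · refine (Finset.sum_congr rfl fun i _ => if_congr
      (show (i-m ∈ S) ↔ i ∈ Finset.Icc (m-Rb) (m+Rb) by
        rw [hS]; simp only [Finset.mem_Icc]; omega) rfl rfl).trans ?_
    rw [Finset.sum_ite_mem, hS, Icc_inter']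

lemma sum_collapseZ {u : ℤ → MvPolynomial ℕ ℂ} {K : ℤ}
    (hu : ∀ k, k ∉ Finset.Icc (-K) K → u k = 0) (v : ℤ → ℂ) {a b : ℤ}
    (ha : a ≤ -K) (hb : K ≤ b) :
    ∑ i ∈ Finset.Icc a b, v i • u i = ∑ i ∈ Finset.Icc (-K) K, v i • u i :=
  (Finset.sum_subset (Finset.Icc_subset_Icc ha hb)
    (fun x _ hx => by rw [hu x hx, smul_zero])).symm

lemma main_case_sne (m n : ℤ) (hm : m ≠ 0) (hn : n ≠ 0) (hs : m + n ≠ 0)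
    (p : MvPolynomial ℕ ℂ) :
    virOp m (virOp n p) - virOp n (virOp m p) =
      ((m - n : ℤ) : ℂ) • virOp (m + n) p +
        (if m = -n then (((m ^ 3 - m : ℤ) : ℂ) / 12) else 0) • p := by
  obtain ⟨B, h1B, hB⟩ := bd_exists p
  have hm1 : m ≤ |m| := le_abs_self m
  have hm2 : -m ≤ |m| := neg_le_abs m
  have hn1 : n ≤ |n| := le_abs_self n
  have hn2 : -n ≤ |n| := neg_le_abs n
  have habs : |m+n| ≤ |m| + |n| := abs_add_le m n
  have habs0 : 0 ≤ |m+n| := abs_nonneg _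
  rw [if_neg (by omega), zero_smul, add_zero]
  set Rb : ℤ := B + 7*(|m|+|n|) + 7 with hRb
  rw [vir_comm_eq m n hm hn p hB h1B hRb]
  have hu : ∀ k, k ∉ Finset.Icc (-(B + |m| + |n|)) (B + |m| + |n|) →
      heisOp (m+n-k) (heisOp k p) = 0 := fun k hk =>
    heis_heis_eq_zero hB h1B hs (by omega) hk
  rw [sum_collapseZ hu _ (a := max (-Rb) (-Rb-n) + n) (b := min Rb (Rb-n) + n)
        (by omega) (by omega),
      sum_collapseZ hu _ (a := -Rb+n) (b := Rb+n) (by omega) (by omega),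
      sum_collapseZ hu _ (a := max (-Rb) (m+n-Rb)) (b := min Rb (m+n+Rb)) (by omega) (by omega),
      sum_collapseZ hu _ (a := max (-Rb) (m-Rb)) (b := min Rb (m+Rb)) (by omega) (by omega)]
  have hpt : ∀ k ∈ Finset.Icc (-(B + |m| + |n|)) (B + |m| + |n|),
      ((k-n:ℤ):ℂ) • heisOp (m+n-k) (heisOp k p) + ((k-n:ℤ):ℂ) • heisOp (m+n-k) (heisOp k p)
      + ((m-k:ℤ):ℂ) • heisOp (m+n-k) (heisOp k p) + ((m-k:ℤ):ℂ) • heisOp (m+n-k) (heisOp k p)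
      = ((2*(m-n):ℤ):ℂ) • heisOp (m+n-k) (heisOp k p) := by
    intro k _
    rw [← add_smul, ← add_smul, ← add_smul]
    congr 1
    push_cast
    ring
  rw [← Finset.sum_add_distrib, ← Finset.sum_add_distrib, ← Finset.sum_add_distrib,
    Finset.sum_congr rfl hpt, ← Finset.smul_sum,
    virop_eq hs p hB h1B (R := B + |m| + |n|) (by omega),
    smul_smul, smul_smul, smul_smul]
  congr 1
  push_cast
  ring

lemma ite_cast_smul (P : Prop) [Decidable P] (c : ℤ) (x : MvPolynomial ℕ ℂ) :
    (if P then ((c:ℤ):ℂ) • x else 0) = (((if P then c else 0 : ℤ)):ℂ) • x := by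
  split_ifs <;> simp

lemma main_case_n0 (m : ℤ) (hm : m ≠ 0) (p : MvPolynomial ℕ ℂ) :
    virOp m (virOp 0 p) - virOp 0 (virOp m p) =
      ((m - 0 : ℤ) : ℂ) • virOp (m + 0) p +
        (if m = -0 then (((m ^ 3 - m : ℤ) : ℂ) / 12) else 0) • p := by
  obtain ⟨B, h1B, hB⟩ := bd_exists p
  have hm1 : m ≤ |m| := le_abs_self m
  have hm2 : -m ≤ |m| := neg_le_abs m
  rw [if_neg (by omega), zero_smul, add_zero, show m + 0 = m by ring,
    show ((m - 0 : ℤ):ℂ) = ((m:ℤ):ℂ) by norm_num]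
  set Rb : ℤ := B + 7*|m| + 7 with hRb
  set S : Finset ℤ := Finset.Icc (-Rb) Rb with hS
  set J : Finset ℤ := Finset.Icc 1 Rb with hJ
  -- inner expansions
  have h0p : virOp 0 p = ∑ j ∈ J, heisOp (-j) (heisOp j p) :=
    virop_zero_eq p hB h1B (by omega)
  have hmp : virOp m p = (2:ℂ)⁻¹ • ∑ i ∈ S, heisOp (m-i) (heisOp i p) :=
    virop_eq hm p hB h1B (by omega)
  -- bounds
  have hBd0 : Bd (virOp 0 p) (B + 1) := by
    rw [virop_zero_eq p hB h1B (R := B) le_rfl]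
    refine Bd.sum ?_
    intro j hj
    rw [Finset.mem_Icc] at hj
    exact ((hB.heis j).heis (-j)).mono (by omega)
  have hBdm : Bd (virOp m p) (B + 2*|m| + 1) := by
    rw [virop_eq hm p hB h1B (R := B + |m|) (by omega)]
    refine Bd.smul _ (Bd.sum ?_)
    intro j hj
    rw [Finset.mem_Icc] at hj
    exact ((hB.heis j).heis (m-j)).mono (by omega)
  -- outer expansions
  have h2 : virOp m (virOp 0 p) = (2:ℂ)⁻¹ • ∑ i ∈ S, heisOp (m-i) (heisOp i (virOp 0 p)) :=
    virop_eq hm (virOp 0 p) hBd0 (by omega) (by omega)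
  have h3 : virOp 0 (virOp m p) = ∑ j ∈ J, heisOp (-j) (heisOp j (virOp m p)) :=
    virop_zero_eq (virOp m p) hBdm (by omega) (by omega)
  rw [h2, h0p, h3, hmp]
  simp only [map_smul, map_sum]
  rw [← Finset.smul_sum, ← smul_sub]
  -- swap and combine double sums
  rw [Finset.sum_comm (s := J) (t := S)
    (f := fun j i => heisOp (-j) (heisOp j (heisOp (m-i) (heisOp i p))))]
  rw [← Finset.sum_sub_distrib]
  have inner : ∀ i ∈ S,
      ((∑ j ∈ J, heisOp (m-i) (heisOp i (heisOp (-j) (heisOp j p)))) -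
        ∑ j ∈ J, heisOp (-j) (heisOp j (heisOp (m-i) (heisOp i p))))
      = (((if i ∈ J then i else 0 : ℤ)):ℂ) • heisOp (m-i) (heisOp i p)
        + (((if -i ∈ J then i else 0 : ℤ)):ℂ) • heisOp (m-i) (heisOp i p)
        + (((if m-i ∈ J then m-i else 0 : ℤ)):ℂ) • heisOp (m-i) (heisOp i p)
        + (((if i-m ∈ J then m-i else 0 : ℤ)):ℂ) • heisOp (m-i) (heisOp i p) := by
    intro i hi
    rw [← Finset.sum_sub_distrib]
    have step1 : ∀ j ∈ J,
        heisOp (m-i) (heisOp i (heisOp (-j) (heisOp j p))) -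
          heisOp (-j) (heisOp j (heisOp (m-i) (heisOp i p)))
        = (if j = i then ((i:ℤ):ℂ) • heisOp (m-i) (heisOp j p) else 0)
          + (if j = -i then ((i:ℤ):ℂ) • heisOp (m-i) (heisOp (-j) p) else 0)
          + (if j = m-i then ((m-i:ℤ):ℂ) • heisOp j (heisOp i p) else 0)
          + (if j = i-m then ((m-i:ℤ):ℂ) • heisOp (-j) (heisOp i p) else 0) := by
      intro j _
      rw [heis_quad (m-i) i (-j) j p]
      simp only [ite_smul, zero_smul]
      rw [if_congr (show (i = -(-j)) ↔ j = i by omega) rfl rfl,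
        if_congr (show (i = -j) ↔ j = -i by omega) rfl rfl,
        if_congr (show (m-i = -(-j)) ↔ j = m-i by omega) rfl rfl,
        if_congr (show (m-i = -j) ↔ j = i-m by omega) rfl rfl]
    rw [Finset.sum_congr rfl step1, Finset.sum_add_distrib, Finset.sum_add_distrib,
      Finset.sum_add_distrib, Finset.sum_ite_eq' J i, Finset.sum_ite_eq' J (-i),
      Finset.sum_ite_eq' J (m-i), Finset.sum_ite_eq' J (i-m)]
    rw [show -(-i) = i by ring, show -(i-m) = m-i by ring]
    rw [ite_cast_smul, ite_cast_smul, ite_cast_smul, ite_cast_smul]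
  rw [Finset.sum_congr rfl inner]
  -- collapse to the core
  have hw : ∀ k, k ∉ Finset.Icc (-(B + |m|)) (B + |m|) →
      heisOp (m-k) (heisOp k p) = 0 := by
    intro k hk
    have := heis_heis_eq_zero hB h1B hm (le_refl (B + |m|)) hk
    exact this
  rw [Finset.sum_add_distrib, Finset.sum_add_distrib, Finset.sum_add_distrib, hS,
    sum_collapseZ hw _ (a := -Rb) (b := Rb) (by omega) (by omega),
    sum_collapseZ hw _ (a := -Rb) (b := Rb) (by omega) (by omega),
    sum_collapseZ hw _ (a := -Rb) (b := Rb) (by omega) (by omega),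
    sum_collapseZ hw _ (a := -Rb) (b := Rb) (by omega) (by omega),
    ← Finset.sum_add_distrib, ← Finset.sum_add_distrib, ← Finset.sum_add_distrib]
  have hpt : ∀ k ∈ Finset.Icc (-(B + |m|)) (B + |m|),
      (((if k ∈ J then k else 0 : ℤ)):ℂ) • heisOp (m-k) (heisOp k p)
      + (((if -k ∈ J then k else 0 : ℤ)):ℂ) • heisOp (m-k) (heisOp k p)
      + (((if m-k ∈ J then m-k else 0 : ℤ)):ℂ) • heisOp (m-k) (heisOp k p)
      + (((if k-m ∈ J then m-k else 0 : ℤ)):ℂ) • heisOp (m-k) (heisOp k p)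
      = ((m:ℤ):ℂ) • heisOp (m-k) (heisOp k p) := by
    intro k hk
    rw [Finset.mem_Icc] at hk
    rw [← add_smul, ← add_smul, ← add_smul, ← Int.cast_add, ← Int.cast_add, ← Int.cast_add]
    congr 1
    congr 1
    simp only [hJ, Finset.mem_Icc]
    split_ifs <;> omega
  rw [Finset.sum_congr rfl hpt, ← Finset.smul_sum,
    ← Finset.sum_subset (Finset.Icc_subset_Icc (show -Rb ≤ -(B+|m|) by omega)
      (show B+|m| ≤ Rb by omega)) (fun x _ hx => hw x hx),
    smul_smul, smul_smul]
  congr 1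
  ring

lemma sum_split (f : ℤ → MvPolynomial ℕ ℂ) {l r : ℤ} (mid : ℤ) (h1 : l ≤ mid) (h2 : mid ≤ r + 1) :
    ∑ k ∈ Finset.Icc l r, f k =
      (∑ k ∈ Finset.Icc l (mid-1), f k) + ∑ k ∈ Finset.Icc mid r, f k := by
  have hdisj : Disjoint (Finset.Icc l (mid-1)) (Finset.Icc mid r) := by
    rw [Finset.disjoint_left]
    intro x hx hx'
    rw [Finset.mem_Icc] at hx hx'
    omega
  rw [← Finset.sum_union hdisj]
  congr 1
  ext x
  simp only [Finset.mem_union, Finset.mem_Icc]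
  omega

lemma sum_neg_reindex (f : ℤ → MvPolynomial ℕ ℂ) (a b : ℤ) :
    ∑ k ∈ Finset.Icc a b, f k = ∑ k ∈ Finset.Icc (-b) (-a), f (-k) := by
  have h : Finset.Icc a b = Finset.map ⟨fun k => -k, neg_injective⟩ (Finset.Icc (-b) (-a)) := by
    ext x
    simp only [Finset.mem_map, Function.Embedding.coeFn_mk, Finset.mem_Icc]
    constructor
    · intro hx
      exact ⟨-x, by omega, by ring⟩
    · rintro ⟨y, hy, rfl⟩
      omega
  rw [h, Finset.sum_map]
  rfl

lemma Icc_succ_right' (a b : ℤ) (h : a ≤ b + 1) :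
    Finset.Icc a (b+1) = insert (b+1) (Finset.Icc a b) := by
  ext x
  simp only [Finset.mem_insert, Finset.mem_Icc]
  omega

lemma sumIcc_id (a : ℤ) : ∀ b : ℤ, a - 1 ≤ b →
    2 * (∑ k ∈ Finset.Icc a b, k) = (a + b) * (b + 1 - a) := by
  refine Int.le_induction ?_ ?_
  · rw [Finset.Icc_eq_empty (by omega)]
    simp only [Finset.sum_empty, mul_zero]
    ring
  · intro b hb IH
    rw [Icc_succ_right' a b (by omega), Finset.sum_insert (by rw [Finset.mem_Icc]; omega)]
    linear_combination IH

lemma sumIcc_sq (a : ℤ) : ∀ b : ℤ, a - 1 ≤ b →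
    6 * (∑ k ∈ Finset.Icc a b, k^2) = b*(b+1)*(2*b+1) - (a-1)*a*(2*a-1) := by
  refine Int.le_induction ?_ ?_
  · rw [Finset.Icc_eq_empty (by omega)]
    simp only [Finset.sum_empty, mul_zero]
    ring
  · intro b hb IH
    rw [Icc_succ_right' a b (by omega), Finset.sum_insert (by rw [Finset.mem_Icc]; omega)]
    linear_combination IH

lemma sum_quad (a b m : ℤ) :
    (∑ k ∈ Finset.Icc a b, (k+m)*(-k)) =
      -(∑ k ∈ Finset.Icc a b, k^2) - m * (∑ k ∈ Finset.Icc a b, k) := by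
  rw [Finset.mul_sum, ← Finset.sum_neg_distrib, ← Finset.sum_sub_distrib]
  exact Finset.sum_congr rfl fun k _ => by ring

lemma sum_quad' (a b m : ℤ) :
    (∑ k ∈ Finset.Icc a b, (m-k)*(-k)) =
      (∑ k ∈ Finset.Icc a b, k^2) - m * (∑ k ∈ Finset.Icc a b, k) := by
  rw [Finset.mul_sum, ← Finset.sum_sub_distrib]
  exact Finset.sum_congr rfl fun k _ => by ring

lemma main_case_nm (m : ℤ) (hm1 : 1 ≤ m) (p : MvPolynomial ℕ ℂ) :
    virOp m (virOp (-m) p) - virOp (-m) (virOp m p) =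
      ((m - -m : ℤ) : ℂ) • virOp (m + -m) p +
        (if m = -(-m) then (((m ^ 3 - m : ℤ) : ℂ) / 12) else 0) • p := by
  obtain ⟨B, h1B, hB⟩ := bd_exists p
  have hm : m ≠ 0 := by omega
  have hmn : (-m : ℤ) ≠ 0 := by omega
  rw [if_pos (by omega), show m + -m = 0 by ring]
  obtain ⟨Rb, hRbdef⟩ : ∃ R : ℤ, R = B + 14*m + 7 := ⟨_, rfl⟩
  have hRb : Rb = B + 7*(|m| + |-m|) + 7 := by
    rw [abs_neg, abs_of_pos (by omega : (0:ℤ) < m)]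
    omega
  rw [vir_comm_eq m (-m) hm hmn p hB h1B hRb]
  simp only [show m + -m = 0 from by ring, zero_sub, sub_neg_eq_add, zero_add]
  rw [show max (-Rb) (-Rb + m) + -m = -Rb from by omega,
      show min Rb (Rb + m) + -m = Rb - m from by omega,
      show (-Rb) + -m = -Rb - m from by ring, show Rb + -m = Rb - m from by ring,
      show max (-Rb) (-Rb) = -Rb from by omega, show min Rb Rb = Rb from by omega,
      show max (-Rb) (m - Rb) = m - Rb from by omega, show min Rb (m + Rb) = Rb from by omega]
  -- facts about u k = heisOp (-k) (heisOp k p)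
  have hu1 : ∀ k : ℤ, B ≤ k → heisOp (-k) (heisOp k p) = 0 := by
    intro k hk
    rw [heis_pos_eq_zero hB hk h1B, map_zero]
  have hu2 : ∀ k : ℤ, k ≤ -B → heisOp (-k) (heisOp k p) = ((-k:ℤ):ℂ) • p := by
    intro k hk
    rw [show k = -((((-k).toNat):ℕ):ℤ) by omega, heis_neg _ (by omega), neg_neg, heis_pos,
      pderiv_mul, pderiv_X_self, one_mul, hB _ (by omega), mul_zero, add_zero]
    norm_cast
  have hu0 : heisOp (-(0:ℤ)) (heisOp 0 p) = 0 := by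
    rw [heis_zero']
    simp
  have hu3 : ∀ k : ℤ, 1 ≤ k →
      heisOp (-(-k)) (heisOp (-k) p) = heisOp (-k) (heisOp k p) + ((k:ℤ):ℂ) • p := by
    intro k hk
    have lhs : heisOp ((k.toNat:ℕ):ℤ) (heisOp (-((k.toNat:ℕ):ℤ)) p)
        = (k.toNat:ℂ) • p + (k.toNat:ℂ) • (X k.toNat * pderiv k.toNat p) := by
      rw [heis_neg _ (by omega), heis_pos, pderiv_mul, pderiv_X_self, one_mul, smul_add]
    have rhs : heisOp (-((k.toNat:ℕ):ℤ)) (heisOp ((k.toNat:ℕ):ℤ) p)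
        = (k.toNat:ℂ) • (X k.toNat * pderiv k.toNat p) := by
      rw [heis_pos, map_smul, heis_neg _ (by omega)]
    rw [neg_neg, show k = (((k.toNat):ℕ):ℤ) by omega, lhs, rhs,
      show ((((k.toNat:ℕ):ℤ)):ℂ) = ((k.toNat:ℕ):ℂ) by norm_cast]
    abel
  -- split the four sums into tail + core
  have key : ∀ (l r : ℤ) (v : ℤ → ℤ), l ≤ -B-1 → B ≤ r →
      (∑ k ∈ Finset.Icc l r, ((v k:ℤ):ℂ) • heisOp (-k) (heisOp k p))
      = ((∑ k ∈ Finset.Icc l (-B-1), v k * (-k) : ℤ):ℂ) • p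
        + ∑ k ∈ Finset.Icc (-B) B, ((v k:ℤ):ℂ) • heisOp (-k) (heisOp k p) := by
    intro l r v hl hr
    rw [sum_split _ (-B) (by omega) (by omega)]
    congr 1
    · have e : ∀ k ∈ Finset.Icc l (-B-1),
          ((v k:ℤ):ℂ) • heisOp (-k) (heisOp k p) = ((v k * -k:ℤ):ℂ) • p := by
        intro k hk
        rw [Finset.mem_Icc] at hk
        rw [hu2 k (by omega), smul_smul, ← Int.cast_mul]
      rw [Finset.sum_congr rfl e, Int.cast_sum, Finset.sum_smul]
    · exact (Finset.sum_subset (Finset.Icc_subset_Icc le_rfl hr) (fun x hx hx' => by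
        rw [Finset.mem_Icc] at hx
        rw [Finset.mem_Icc, not_and_or] at hx'
        rw [hu1 x (by omega), smul_zero])).symm
  rw [key (-Rb) (Rb-m) _ (by omega) (by omega), key (-Rb-m) (Rb-m) _ (by omega) (by omega),
    key (-Rb) Rb _ (by omega) (by omega), key (m-Rb) Rb _ (by omega) (by omega)]
  -- decompose core sums
  have hH1 : (∑ k ∈ Finset.Icc (-B) B, ((k+m:ℤ):ℂ) • heisOp (-k) (heisOp k p))
      = ((m:ℤ):ℂ) • (∑ k ∈ Finset.Icc (-B) B, heisOp (-k) (heisOp k p))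
        + ∑ k ∈ Finset.Icc (-B) B, ((k:ℤ):ℂ) • heisOp (-k) (heisOp k p) := by
    rw [Finset.smul_sum, ← Finset.sum_add_distrib]
    refine Finset.sum_congr rfl fun k _ => ?_
    rw [← add_smul]
    congr 1
    push_cast
    ring
  have hH3 : (∑ k ∈ Finset.Icc (-B) B, ((m-k:ℤ):ℂ) • heisOp (-k) (heisOp k p))
      = ((m:ℤ):ℂ) • (∑ k ∈ Finset.Icc (-B) B, heisOp (-k) (heisOp k p))
        - ∑ k ∈ Finset.Icc (-B) B, ((k:ℤ):ℂ) • heisOp (-k) (heisOp k p) := by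
    rw [Finset.smul_sum, ← Finset.sum_sub_distrib]
    refine Finset.sum_congr rfl fun k _ => ?_
    rw [← sub_smul]
    congr 1
    push_cast
    ring
  rw [hH1, hH3]
  -- the core sum in terms of virOp 0 p
  have hU : (∑ k ∈ Finset.Icc (-B) B, heisOp (-k) (heisOp k p))
      = virOp 0 p + virOp 0 p + (((∑ k ∈ Finset.Icc 1 B, k : ℤ)):ℂ) • p := by
    rw [sum_split _ 0 (by omega) (by omega),
      show (0:ℤ) - 1 = -1 from by ring]
    have h0B : (∑ k ∈ Finset.Icc (0:ℤ) B, heisOp (-k) (heisOp k p))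
        = ∑ k ∈ Finset.Icc (1:ℤ) B, heisOp (-k) (heisOp k p) := by
      refine (Finset.sum_subset (Finset.Icc_subset_Icc (by omega) le_rfl) ?_).symm
      intro x hx hx'
      rw [Finset.mem_Icc] at hx
      rw [Finset.mem_Icc, not_and_or] at hx'
      rw [show x = 0 by omega]
      exact hu0
    rw [h0B, sum_neg_reindex _ (-B) (-1), neg_neg, neg_neg]
    have e : ∀ k ∈ Finset.Icc (1:ℤ) B,
        heisOp (-(-k)) (heisOp (-k) p) = heisOp (-k) (heisOp k p) + ((k:ℤ):ℂ) • p := by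
      intro k hk
      rw [Finset.mem_Icc] at hk
      exact hu3 k (by omega)
    rw [Finset.sum_congr rfl e, Finset.sum_add_distrib, virop_zero_eq p hB h1B le_rfl]
    rw [Int.cast_sum, Finset.sum_smul]
    abel
  rw [hU]
  -- the integer identity
  have t1 := sumIcc_id (-Rb) (-B-1) (by omega)
  have t2 := sumIcc_id (-Rb-m) (-B-1) (by omega)
  have t4 := sumIcc_id (m-Rb) (-B-1) (by omega)
  have g := sumIcc_id 1 B (by omega)
  have q2 := sumIcc_sq (-Rb-m) (-B-1) (by omega)
  have q4 := sumIcc_sq (m-Rb) (-B-1) (by omega)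
  have hZ : 6 * ((∑ k ∈ Finset.Icc (-Rb) (-B-1), (k+m)*(-k))
      + (∑ k ∈ Finset.Icc (-Rb-m) (-B-1), (k+m)*(-k))
      + (∑ k ∈ Finset.Icc (-Rb) (-B-1), (m-k)*(-k))
      + (∑ k ∈ Finset.Icc (m-Rb) (-B-1), (m-k)*(-k))
      + 4*m*(∑ k ∈ Finset.Icc 1 B, k)) = 2*(m^3-m) := by
    rw [sum_quad, sum_quad, sum_quad', sum_quad']
    linear_combination (-6*m)*t1 + (-3*m)*t2 + (-3*m)*t4 - q2 + q4 + (12*m)*g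
  have hZC := congrArg (fun z : ℤ => (z : ℂ)) hZ
  push_cast at hZC
  -- final scalar bookkeeping
  match_scalars
  · push_cast [Int.cast_sum]
    ring_nf
    ring_nf at hZC
    linear_combination (1/24 : ℂ) * hZC
  · push_cast
    ring
  · ring

lemma case_eq (m : ℤ) (p : MvPolynomial ℕ ℂ) :
    virOp m (virOp m p) - virOp m (virOp m p) =
      ((m - m : ℤ) : ℂ) • virOp (m + m) p +
        (if m = -m then (((m ^ 3 - m : ℤ) : ℂ) / 12) else 0) • p := by
  rw [sub_self]
  by_cases h : m = -m
  · have hm0 : m = 0 := by omega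
    subst hm0
    norm_num
  · rw [if_neg h, zero_smul, add_zero, sub_self]
    norm_num

lemma antisym_step (m n : ℤ) (p : MvPolynomial ℕ ℂ)
    (h : virOp n (virOp m p) - virOp m (virOp n p) =
      ((n - m : ℤ) : ℂ) • virOp (n + m) p +
        (if n = -m then (((n ^ 3 - n : ℤ) : ℂ) / 12) else 0) • p) :
    virOp m (virOp n p) - virOp n (virOp m p) =
      ((m - n : ℤ) : ℂ) • virOp (m + n) p +
        (if m = -n then (((m ^ 3 - m : ℤ) : ℂ) / 12) else 0) • p := by
  rw [show virOp m (virOp n p) - virOp n (virOp m p)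
      = -(virOp n (virOp m p) - virOp m (virOp n p)) from (neg_sub _ _).symm, h,
    neg_add, show n + m = m + n from add_comm n m, ← neg_smul, ← neg_smul]
  congr 1
  · congr 1
    push_cast
    ring
  · by_cases hc : m = -n
    · rw [if_pos hc, if_pos (by omega)]
      have hn : n = -m := by omega
      subst hn
      congr 1
      push_cast
      ring
    · rw [if_neg (by omega), if_neg hc, neg_zero]

end AuxVirasoro

/-- the operators `L_n` satisfy the Virasoro relations
`[L_m, L_n] = (m-n)L_{m+n} + δ_{m,-n}·((m³-m)/12)·Id`, i.e. `H` is a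
Virasoro module of central charge `1`. -/
theorem fock_space_virasoro (m n : ℤ) (p : MvPolynomial ℕ ℂ) :
    virOp m (virOp n p) - virOp n (virOp m p) =
      ((m - n : ℤ) : ℂ) • virOp (m + n) p +
        (if m = -n then (((m ^ 3 - m : ℤ) : ℂ) / 12) else 0) • p := by
  rcases eq_or_ne m n with rfl|hmn
  · exact case_eq m p
  rcases eq_or_ne n 0 with rfl|hn
  · exact main_case_n0 m hmn p
  rcases eq_or_ne m 0 with rfl|hm
  · exact antisym_step 0 n p (main_case_n0 n hn p)
  rcases eq_or_ne (m+n) 0 with hs|hs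
  · have hn' : n = -m := by omega
    subst hn'
    rcases le_or_gt 1 m with h1|h1
    · exact main_case_nm m h1 p
    · refine antisym_step m (-m) p ?_
      have hrec := main_case_nm (-m) (by omega) p
      simp only [neg_neg] at hrec
      rw [if_true] at hrec
      rw [if_pos rfl]
      exact hrec
  · exact main_case_sne m n hm hn hs p
end

section
/- The quotient algebra U(sl₂)/(e²) is isomorphic, as an associative ℂ-algebra, to ℂ ⊕ Mat₂(ℂ), the direct sum of ℂ and the algebra of 2×2 complex matrices. -/
attribute [local instance 100] LieRing.ofAssociativeRing

noncomputable section

namespace Usl2Aux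

abbrev A2 := ℂ × Matrix (Fin 2) (Fin 2) ℂ
def vE : A2 := (0, !![0,1;0,0])
def vH : A2 := (0, !![1,0;0,-1])
def vF : A2 := (0, !![0,0;1,0])

lemma brHE : ⁅vH, vE⁆ = (2:ℂ) • vE := by
  refine Prod.ext (by simp [vH, vE, Ring.lie_def]) ?_
  show vH.2 * vE.2 - vE.2 * vH.2 = (2:ℂ) • vE.2
  ext i j
  fin_cases i <;> fin_cases j <;>
    · simp [vH, vE, Matrix.mul_apply, Fin.sum_univ_two]; try norm_num

lemma brHF : ⁅vH, vF⁆ = (-2:ℂ) • vF := by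
  refine Prod.ext (by simp [vH, vF, Ring.lie_def]) ?_
  show vH.2 * vF.2 - vF.2 * vH.2 = (-2:ℂ) • vF.2
  ext i j
  fin_cases i <;> fin_cases j <;>
    · simp [vH, vF, Matrix.mul_apply, Fin.sum_univ_two]; try norm_num

lemma brEF : ⁅vE, vF⁆ = vH := by
  refine Prod.ext (by simp [vE, vF, vH, Ring.lie_def]) ?_
  show vE.2 * vF.2 - vF.2 * vE.2 = vH.2
  ext i j
  fin_cases i <;> fin_cases j <;>
    · simp [vH, vE, vF, Matrix.mul_apply, Fin.sum_univ_two]; try norm_num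

lemma vEsq : vE * vE = 0 := by
  refine Prod.ext (by simp [vE]) ?_
  show vE.2 * vE.2 = (0 : A2).2
  ext i j
  fin_cases i <;> fin_cases j <;>
    · simp [vE, Matrix.mul_apply, Fin.sum_univ_two]

lemma surj_aux (a : ℂ) (M : Matrix (Fin 2) (Fin 2) ℂ) :
    a•(1:A2) + ((M 0 0 - a)•(vE*vF) + (M 0 1)•vE + (M 1 0)•vF + (M 1 1 - a)•(vF*vE))
      = (a, M) := by
  refine Prod.ext ?_ ?_
  · simp [vE, vF]
  · show a•(1 : Matrix (Fin 2) (Fin 2) ℂ) + ((M 0 0 - a)•(vE.2*vF.2) + (M 0 1)•vE.2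
        + (M 1 0)•vF.2 + (M 1 1 - a)•(vF.2*vE.2)) = M
    ext i j
    fin_cases i <;> fin_cases j <;>
      · simp [vE, vF, Matrix.mul_apply, Fin.sum_univ_two, Matrix.one_apply]
        try ring

lemma ker_aux {c0 c1 c2 c3 c4 : ℂ}
    (hs : c0•(1:A2) + (c1•vH + (c2•(vH*vH) + (c3•vE + c4•vF))) = 0) :
    c0 = 0 ∧ c1 = 0 ∧ c2 = 0 ∧ c3 = 0 ∧ c4 = 0 := by
  have h1 := congrArg Prod.fst hs
  have h00 := congrArg (fun p : A2 => p.2 0 0) hs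
  have h01 := congrArg (fun p : A2 => p.2 0 1) hs
  have h10 := congrArg (fun p : A2 => p.2 1 0) hs
  have h11 := congrArg (fun p : A2 => p.2 1 1) hs
  simp [vE, vH, vF, Matrix.mul_apply, Fin.sum_univ_two, Matrix.one_apply] at h1 h00 h01 h10 h11
  refine ⟨h1, ?_, ?_, ?_, ?_⟩
  · linear_combination (h00 - h11) / 2
  · linear_combination (h00 + h11) / 2 - h1
  · linear_combination h01
  · linear_combination h10

end Usl2Aux

open Usl2Aux

/-- `U(sl₂)/(e²)` is isomorphic as an associative ℂ-algebra to
`ℂ ⊕ Mat₂(ℂ)`; we phrase this via a surjective ℂ-algebra homomorphism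
`U(sl₂) → ℂ × Mat₂(ℂ)` whose kernel is exactly the two-sided ideal `(e²)`. -/
theorem usl2_mod_esq_iso_C_plus_mat2
    (L : Type*) [LieRing L] [LieAlgebra ℂ L]
    (e h f : L)
    (he : ⁅h, e⁆ = (2 : ℂ) • e) (hf : ⁅h, f⁆ = (-2 : ℂ) • f) (hef : ⁅e, f⁆ = h)
    (hspan : Submodule.span ℂ {e, h, f} = ⊤)
    (hbasis : LinearIndependent ℂ ![e, h, f])
    (ι : L →ₗ⁅ℂ⁆ UniversalEnvelopingAlgebra ℂ L)
    (hι : ι = UniversalEnvelopingAlgebra.ι ℂ)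
    (I : TwoSidedIdeal (UniversalEnvelopingAlgebra ℂ L))
    (hI : I = TwoSidedIdeal.span {ι e * ι e}) :
    ∃ φ : UniversalEnvelopingAlgebra ℂ L →ₐ[ℂ] ℂ × Matrix (Fin 2) (Fin 2) ℂ,
      Function.Surjective φ ∧ ∀ u, φ u = 0 ↔ u ∈ I := by
  subst hι
  -- ### the 2-dimensional ⊕ trivial representation, as a linear map
  have hrange : Set.range ![e, h, f] = {e, h, f} := by
    ext x
    constructor
    · rintro ⟨i, rfl⟩
      fin_cases i
      · left; rfl
      · right; left; rfl
      · right; right; rfl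
    · rintro (rfl | rfl | rfl)
      exacts [⟨0, rfl⟩, ⟨1, rfl⟩, ⟨2, rfl⟩]
  have hspan' : ⊤ ≤ Submodule.span ℂ (Set.range ![e, h, f]) := by
    rw [hrange]; exact hspan.ge
  set b : Module.Basis (Fin 3) ℂ L := Module.Basis.mk hbasis hspan' with hbdef
  have hb0 : b 0 = e := by rw [hbdef, Module.Basis.mk_apply]; rfl
  have hb1 : b 1 = h := by rw [hbdef, Module.Basis.mk_apply]; rfl
  have hb2 : b 2 = f := by rw [hbdef, Module.Basis.mk_apply]; rfl
  set T : L →ₗ[ℂ] A2 := b.constr ℂ ![vE, vH, vF] with hTdef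
  have hTe : T e = vE := by rw [hTdef, ← hb0, Module.Basis.constr_basis]; rfl
  have hTh : T h = vH := by rw [hTdef, ← hb1, Module.Basis.constr_basis]; rfl
  have hTf : T f = vF := by rw [hTdef, ← hb2, Module.Basis.constr_basis]; rfl
  have hmem : ∀ x : L, x ∈ Submodule.span ℂ ({e,h,f} : Set L) := by
    intro x; rw [hspan]; trivial
  -- ### it is a morphism of Lie algebras
  have key : ∀ x ∈ ({e,h,f} : Set L), ∀ y ∈ ({e,h,f} : Set L), T ⁅x, y⁆ = ⁅T x, T y⁆ := by
    intro x hx y hy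
    simp only [Set.mem_insert_iff, Set.mem_singleton_iff] at hx hy
    rcases hx with hx|hx|hx <;> rcases hy with hy|hy|hy <;> rw [hx, hy]
    · rw [lie_self, map_zero, hTe, lie_self]
    · rw [← lie_skew, he, map_neg, map_smul, hTe, hTh, ← lie_skew vE vH, brHE]
    · rw [hef, hTh, hTe, hTf, brEF]
    · rw [he, map_smul, hTe, hTh, brHE]
    · rw [lie_self, map_zero, hTh, lie_self]
    · rw [hf, map_smul, hTf, hTh, brHF]
    · rw [← lie_skew, hef, map_neg, hTh, hTf, hTe, ← lie_skew vF vE, brEF]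
    · rw [← lie_skew, hf, map_neg, map_smul, hTf, hTh, ← lie_skew vF vH, brHF]
    · rw [lie_self, map_zero, hTf, lie_self]
  have hlie : ∀ x y : L, T ⁅x, y⁆ = ⁅T x, T y⁆ := by
    intro x y
    induction hmem x using Submodule.span_induction with
    | mem x hx =>
      induction hmem y using Submodule.span_induction with
      | mem y hy => exact key _ hx _ hy
      | zero => rw [lie_zero, map_zero, lie_zero]
      | add y z _ _ hy hz => rw [lie_add, map_add, hy, hz, map_add, lie_add]
      | smul c y _ hy => rw [lie_smul, map_smul, hy, map_smul, lie_smul]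
    | zero => rw [zero_lie, map_zero, zero_lie]
    | add x z _ _ hx hz => rw [add_lie, map_add, hx, hz, map_add, add_lie]
    | smul c x _ hx => rw [smul_lie, map_smul, hx, map_smul, smul_lie]
  set ρ : L →ₗ⁅ℂ⁆ A2 := { T with map_lie' := fun {x y} => hlie x y } with hρdef
  -- ### the algebra morphism
  set φ : UniversalEnvelopingAlgebra ℂ L →ₐ[ℂ] A2 :=
    UniversalEnvelopingAlgebra.lift ℂ ρ with hφdef
  set E : UniversalEnvelopingAlgebra ℂ L := UniversalEnvelopingAlgebra.ι ℂ e with hE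
  set H : UniversalEnvelopingAlgebra ℂ L := UniversalEnvelopingAlgebra.ι ℂ h with hH
  set F : UniversalEnvelopingAlgebra ℂ L := UniversalEnvelopingAlgebra.ι ℂ f with hF
  have hφE : φ E = vE := by
    rw [hφdef, hE, UniversalEnvelopingAlgebra.lift_ι_apply]; exact hTe
  have hφH : φ H = vH := by
    rw [hφdef, hH, UniversalEnvelopingAlgebra.lift_ι_apply]; exact hTh
  have hφF : φ F = vF := by
    rw [hφdef, hF, UniversalEnvelopingAlgebra.lift_ι_apply]; exact hTf
  -- ### the commutation relations in the enveloping algebra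
  have hR1 : H * E = E * H + 2 * E := by
    have t := (UniversalEnvelopingAlgebra.ι ℂ (L := L)).map_lie h e
    rw [he, Ring.lie_def, map_smul, Algebra.smul_def, map_ofNat] at t
    rw [← hE, ← hH] at t
    linear_combination (norm := noncomm_ring) -t
  have hR2 : H * F = F * H - 2 * F := by
    have t := (UniversalEnvelopingAlgebra.ι ℂ (L := L)).map_lie h f
    rw [hf, Ring.lie_def, map_smul, Algebra.smul_def, map_neg, map_ofNat] at t
    rw [← hF, ← hH] at t
    linear_combination (norm := noncomm_ring) -t
  have hR3 : E * F = F * E + H := by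
    have t := (UniversalEnvelopingAlgebra.ι ℂ (L := L)).map_lie e f
    rw [hef, Ring.lie_def] at t
    rw [← hE, ← hF, ← hH] at t
    linear_combination (norm := noncomm_ring) -t
  -- ### membership facts for the ideal I
  have mEE : E * E ∈ I := by
    rw [hI]; exact TwoSidedIdeal.subset_span rfl
  have hsm : ∀ (c : ℂ) (x : UniversalEnvelopingAlgebra ℂ L), x ∈ I → c • x ∈ I := by
    intro c x hx; rw [Algebra.smul_def]; exact I.mul_mem_left _ _ hx
  have divc : ∀ (c : ℂ), c ≠ 0 → ∀ x : UniversalEnvelopingAlgebra ℂ L, c • x ∈ I → x ∈ I := by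
    intro c hc x hx
    have := hsm c⁻¹ _ hx
    rwa [smul_smul, inv_mul_cancel₀ hc, one_smul] at this
  have m1 : E * H + E ∈ I := by
    apply divc 2 two_ne_zero
    have heq : (2:ℂ) • (E * H + E) = (E * E) * F - F * (E * E) := by
      rw [Algebra.smul_def, map_ofNat]
      linear_combination (norm := noncomm_ring) -(E*hR3) - hR3*E - hR1
    rw [heq]
    exact I.sub_mem (I.mul_mem_right _ _ mEE) (I.mul_mem_left _ _ mEE)
  have m1' : H * E - E ∈ I := by
    have heq : H * E - E = E * H + E := by linear_combination (norm := noncomm_ring) hR1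
    rw [heq]; exact m1
  have m2 : 2*(E*F) - H*H - H ∈ I := by
    have heq : 2*(E*F) - H*H - H = F*(E*H+E) - (E*H+E)*F := by
      linear_combination (norm := noncomm_ring) E*hR2 + hR3*H + hR3
    rw [heq]
    exact I.sub_mem (I.mul_mem_left _ _ m1) (I.mul_mem_right _ _ m1)
  have m3 : F * H - F ∈ I := by
    apply divc 6 (by norm_num)
    have heq : (6:ℂ) • (F * H - F) =
        (2*(E*F) - H*H - H)*F - F*(2*(E*F) - H*H - H) := by
      rw [Algebra.smul_def, map_ofNat]
      linear_combination (norm := noncomm_ring) -3*hR2 + hR2*H + H*hR2 - 2*(hR3*F)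
    rw [heq]
    exact I.sub_mem (I.mul_mem_right _ _ m2) (I.mul_mem_left _ _ m2)
  have m3' : H * F + F ∈ I := by
    have heq : H * F + F = F * H - F := by linear_combination (norm := noncomm_ring) hR2
    rw [heq]; exact m3
  have m4 : F * F ∈ I := by
    apply divc 2 two_ne_zero
    have heq : (2:ℂ) • (F * F) = F*(F*H - F) - (F*H - F)*F := by
      rw [Algebra.smul_def, map_ofNat]
      linear_combination (norm := noncomm_ring) F*hR2
    rw [heq]
    exact I.sub_mem (I.mul_mem_left _ _ m3) (I.mul_mem_right _ _ m3)
  have m5 : H*H*H - H ∈ I := by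
    have heq : H*H*H - H = 2*((E*H + E)*F) + (2*(E*F) - H*H - H)
        - H*(2*(E*F) - H*H - H) := by
      linear_combination (norm := noncomm_ring) 2*(hR1*F)
    rw [heq]
    exact I.sub_mem (I.add_mem (I.mul_mem_left _ _ (I.mul_mem_right _ _ m1)) m2)
      (I.mul_mem_left _ _ m2)
  have m2' : E*F - (2⁻¹:ℂ)•(H*H) - (2⁻¹:ℂ)•H ∈ I := by
    apply divc 2 two_ne_zero
    have heq : (2:ℂ) • (E*F - (2⁻¹:ℂ)•(H*H) - (2⁻¹:ℂ)•H) = 2*(E*F) - H*H - H := by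
      rw [smul_sub, smul_sub, smul_smul, smul_smul]
      norm_num
      rw [Algebra.smul_def, map_ofNat]
    rw [heq]; exact m2
  have m2'' : F*E - (2⁻¹:ℂ)•(H*H) + (2⁻¹:ℂ)•H ∈ I := by
    have heq : F*E - (2⁻¹:ℂ)•(H*H) + (2⁻¹:ℂ)•H = E*F - (2⁻¹:ℂ)•(H*H) - (2⁻¹:ℂ)•H := by
      rw [hR3]; module
    rw [heq]; exact m2'
  -- ### the finite-dimensional complement
  set S : Submodule ℂ (UniversalEnvelopingAlgebra ℂ L) :=
    Submodule.span ℂ ({1, H, H*H, E, F} : Set (UniversalEnvelopingAlgebra ℂ L)) with hS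
  set K : Submodule ℂ (UniversalEnvelopingAlgebra ℂ L) :=
    { carrier := {x | x ∈ I}
      add_mem' := fun ha hb => I.add_mem ha hb
      zero_mem' := I.zero_mem
      smul_mem' := fun c x hx => by
        simp only [Set.mem_setOf_eq] at *
        rw [Algebra.smul_def]
        exact I.mul_mem_left _ _ hx } with hK
  have hKmem : ∀ x : UniversalEnvelopingAlgebra ℂ L, x ∈ I → x ∈ K := fun x hx => hx
  set W := K ⊔ S with hW
  have hSW : ∀ x ∈ S, x ∈ W := fun x hx => Submodule.mem_sup_right hx
  have memW : ∀ (x y z : UniversalEnvelopingAlgebra ℂ L),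
      y ∈ I → z ∈ S → x = y + z → x ∈ W := by
    intro x y z hy hz hxyz
    exact hxyz ▸ Submodule.add_mem_sup (hKmem y hy) hz
  have h1S : (1 : UniversalEnvelopingAlgebra ℂ L) ∈ S :=
    Submodule.subset_span (by simp)
  have hHS : H ∈ S := Submodule.subset_span (by simp)
  have hH2S : H*H ∈ S := Submodule.subset_span (by simp)
  have hES : E ∈ S := Submodule.subset_span (by simp)
  have hFS : F ∈ S := Submodule.subset_span (by simp)
  have table : ∀ x ∈ S, ∀ y ∈ S, x * y ∈ W := by
    intro x hx
    induction hx using Submodule.span_induction with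
    | mem x hx =>
      intro y hy
      induction hy using Submodule.span_induction with
      | mem y hy =>
        simp only [Set.mem_insert_iff, Set.mem_singleton_iff] at hx hy
        rcases hx with hx|hx|hx|hx|hx <;> rcases hy with hy|hy|hy|hy|hy <;> rw [hx, hy]
        · rw [one_mul]; exact hSW _ h1S
        · rw [one_mul]; exact hSW _ hHS
        · rw [one_mul]; exact hSW _ hH2S
        · rw [one_mul]; exact hSW _ hES
        · rw [one_mul]; exact hSW _ hFS
        · rw [mul_one]; exact hSW _ hHS
        · exact hSW _ hH2S
        · exact memW _ (H*H*H - H) H m5 hHS (by noncomm_ring)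
        · exact memW _ (H*E - E) E m1' hES (by noncomm_ring)
        · exact memW _ (H*F + F) (-F) m3' (S.neg_mem hFS) (by abel)
        · rw [mul_one]; exact hSW _ hH2S
        · exact memW _ (H*H*H - H) H m5 hHS (by noncomm_ring)
        · exact memW _ (H*(H*H*H - H)) (H*H) (I.mul_mem_left _ _ m5) hH2S (by noncomm_ring)
        · exact memW _ (H*(H*E - E) + (H*E - E)) E
            (I.add_mem (I.mul_mem_left _ _ m1') m1') hES (by noncomm_ring)
        · exact memW _ (H*(H*F + F) - (H*F + F)) F
            (I.sub_mem (I.mul_mem_left _ _ m3') m3') hFS (by noncomm_ring)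
        · rw [mul_one]; exact hSW _ hES
        · exact memW _ (E*H + E) (-E) m1 (S.neg_mem hES) (by abel)
        · exact memW _ ((E*H + E)*H - (E*H + E)) E
            (I.sub_mem (I.mul_mem_right _ _ m1) m1) hES (by noncomm_ring)
        · exact memW _ (E*E) 0 mEE S.zero_mem (add_zero _).symm
        · exact memW _ (E*F - (2⁻¹:ℂ)•(H*H) - (2⁻¹:ℂ)•H)
            ((2⁻¹:ℂ)•(H*H) + (2⁻¹:ℂ)•H) m2'
            (S.add_mem (S.smul_mem _ hH2S) (S.smul_mem _ hHS)) (by abel)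
        · rw [mul_one]; exact hSW _ hFS
        · exact memW _ (F*H - F) F m3 hFS (by noncomm_ring)
        · exact memW _ ((F*H - F)*H + (F*H - F)) F
            (I.add_mem (I.mul_mem_right _ _ m3) m3) hFS (by noncomm_ring)
        · exact memW _ (F*E - (2⁻¹:ℂ)•(H*H) + (2⁻¹:ℂ)•H)
            ((2⁻¹:ℂ)•(H*H) - (2⁻¹:ℂ)•H) m2''
            (S.sub_mem (S.smul_mem _ hH2S) (S.smul_mem _ hHS)) (by abel)
        · exact memW _ (F*F) 0 m4 S.zero_mem (add_zero _).symm
      | zero => rw [mul_zero]; exact hSW _ S.zero_mem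
      | add y z _ _ hy hz => rw [mul_add]; exact W.add_mem hy hz
      | smul c y _ hy => rw [mul_smul_comm]; exact W.smul_mem _ hy
    | zero => intro y hy; rw [zero_mul]; exact hSW _ S.zero_mem
    | add x z _ _ hx hz => intro y hy; rw [add_mul]; exact W.add_mem (hx y hy) (hz y hy)
    | smul c x _ hx => intro y hy; rw [smul_mul_assoc]; exact W.smul_mem _ (hx y hy)
  have mulW : ∀ x ∈ W, ∀ y ∈ W, x * y ∈ W := by
    intro x hx y hy
    rw [hW, Submodule.mem_sup] at hx hy
    obtain ⟨a, haI, s, hs, rfl⟩ := hx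
    obtain ⟨bb, hbI, t, ht, rfl⟩ := hy
    have hzero : (a + s) * (bb + t) = (a*(bb+t) + s*bb) + s*t := by noncomm_ring
    rw [hzero]
    exact W.add_mem
      (Submodule.mem_sup_left (hKmem _ (I.add_mem (I.mul_mem_right _ _ haI)
        (I.mul_mem_left _ _ hbI))))
      (table s hs t ht)
  -- ### W is everything
  have hιS : ∀ x : L, UniversalEnvelopingAlgebra.ι ℂ x ∈ S := by
    intro x
    induction hmem x using Submodule.span_induction with
    | mem x hx =>
      simp only [Set.mem_insert_iff, Set.mem_singleton_iff] at hx
      rcases hx with hx|hx|hx <;> rw [hx]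
      · exact hES
      · exact hHS
      · exact hFS
    | zero => rw [map_zero]; exact S.zero_mem
    | add x z _ _ hx hz => rw [map_add]; exact S.add_mem hx hz
    | smul c x _ hx => rw [map_smul]; exact S.smul_mem _ hx
  have htop : ∀ u : UniversalEnvelopingAlgebra ℂ L, u ∈ W := by
    have hsurj : Function.Surjective (UniversalEnvelopingAlgebra.mkAlgHom ℂ L) :=
      by unfold UniversalEnvelopingAlgebra.mkAlgHom; exact RingCon.mkₐ_surjective _
    intro u
    obtain ⟨t, rfl⟩ := hsurj u
    induction t using TensorAlgebra.induction with
    | algebraMap r =>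
      rw [AlgHom.commutes, Algebra.algebraMap_eq_smul_one]
      exact hSW _ (S.smul_mem _ h1S)
    | ι x =>
      rw [← UniversalEnvelopingAlgebra.ι_apply]
      exact hSW _ (hιS x)
    | mul a bb ha hb => rw [map_mul]; exact mulW _ ha _ hb
    | add a bb ha hb => rw [map_add]; exact W.add_mem ha hb
  -- ### φ kills I
  have hφI : ∀ u ∈ I, φ u = 0 := by
    intro u hu
    rw [hI] at hu
    have hEE0 : φ (E * E) = 0 := by rw [map_mul, hφE, vEsq]
    have : u ∈ TwoSidedIdeal.ker φ := by
      refine TwoSidedIdeal.mem_span_iff.mp hu (TwoSidedIdeal.ker φ) ?_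
      intro x hx
      rw [Set.mem_singleton_iff] at hx
      rw [hx]
      exact (TwoSidedIdeal.mem_ker φ).mpr hEE0
    exact (TwoSidedIdeal.mem_ker φ).mp this
  refine ⟨φ, ?_, ?_⟩
  · -- ### surjectivity
    rintro ⟨a, M⟩
    refine ⟨a•1 + ((M 0 0 - a)•(E*F) + (M 0 1)•E + (M 1 0)•F + (M 1 1 - a)•(F*E)), ?_⟩
    rw [map_add, map_smul, map_one, map_add, map_add, map_add, map_smul, map_smul,
      map_smul, map_smul, map_mul, map_mul, hφE, hφF]
    exact surj_aux a M
  · -- ### kernel is exactly I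
    intro u
    constructor
    · intro hu0
      have huW := htop u
      rw [hW, Submodule.mem_sup] at huW
      obtain ⟨k, hkK, s, hsS, hks⟩ := huW
      have hkI : k ∈ I := hkK
      have hφs : φ s = 0 := by
        have hsum : φ k + φ s = 0 := by rw [← map_add, hks]; exact hu0
        rwa [hφI k hkI, zero_add] at hsum
      rw [hS] at hsS
      rw [Submodule.mem_span_insert] at hsS
      obtain ⟨c0, z0, hz0, rfl⟩ := hsS
      rw [Submodule.mem_span_insert] at hz0
      obtain ⟨c1, z1, hz1, rfl⟩ := hz0
      rw [Submodule.mem_span_insert] at hz1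
      obtain ⟨c2, z2, hz2, rfl⟩ := hz1
      rw [Submodule.mem_span_insert] at hz2
      obtain ⟨c3, z3, hz3, rfl⟩ := hz2
      rw [Submodule.mem_span_singleton] at hz3
      obtain ⟨c4, rfl⟩ := hz3
      rw [map_add, map_smul, map_one, map_add, map_smul, map_add, map_smul, map_mul,
        map_add, map_smul, map_smul, hφE, hφH, hφF] at hφs
      obtain ⟨hc0, hc1, hc2, hc3, hc4⟩ := ker_aux hφs
      rw [← hks]
      rw [hc0, hc1, hc2, hc3, hc4]
      simpa using hkI
    · exact hφI u
end
end
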